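/- Suppose n ≥ 2, X is a Hausdorff space, G is an analytic n-dimensional dihypergraph on X (an n-ary relation consisting of non-constant sequences), and A ⊆ X is an analytic G-independent set. Then there is a Borel G-independent set B ⊆ X with A ⊆ B. -/

import Mathlib

open MeasureTheory Set

/-- An analytic set intersected with a Borel set is analytic. -/
lemma analyticSet_inter_borel {α : Type} [TopologicalSpace α] {s u : Set α}
    (hs : AnalyticSet s) (hu : MeasurableSet[borel α] u) : AnalyticSet (s ∩ u) := by
  rw [AnalyticSet] at hs
  rcases hs with rfl | ⟨f, fcont, rfl⟩
  · simpa using analyticSet_empty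
  · letI : MeasurableSpace α := borel α
    haveI : BorelSpace α := ⟨rfl⟩
    have hfm : Measurable f := fcont.measurable
    have hpre : MeasurableSet (f ⁻¹' u) := hfm hu
    have : AnalyticSet (f '' (f ⁻¹' u)) :=
      hpre.analyticSet.image_of_continuous fcont
    rwa [Set.image_preimage_eq_inter_range, Set.inter_comm] at this

lemma analyticSet_union {α : Type} [TopologicalSpace α] {s t : Set α}
    (hs : AnalyticSet s) (ht : AnalyticSet t) : AnalyticSet (s ∪ t) := by
  rw [Set.union_eq_iUnion]
  exact AnalyticSet.iUnion (by rintro (_|_) <;> simpa)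

lemma analyticSet_prod {α β : Type} [TopologicalSpace α] [TopologicalSpace β]
    {s : Set α} {t : Set β} (hs : AnalyticSet s) (ht : AnalyticSet t) :
    AnalyticSet (s ×ˢ t) := by
  rcases analyticSet_iff_exists_polishSpace_range.1 hs with ⟨Z, _, _, f, fc, rfl⟩
  rcases analyticSet_iff_exists_polishSpace_range.1 ht with ⟨W, _, _, g, gc, rfl⟩
  rw [← Set.range_prodMap]
  exact analyticSet_range_of_polishSpace (fc.prodMap gc)

/-- The set of elements of an analytic `G` whose `j`-th coordinate lies in the
analytic set `A` is analytic. -/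
lemma analyticSet_coord_mem {n : ℕ} {X : Type} [TopologicalSpace X] [T2Space X]
    {G : Set (Fin n → X)} (hG : AnalyticSet G) {A : Set X} (hA : AnalyticSet A)
    (j : Fin n) : AnalyticSet {g ∈ G | g j ∈ A} := by
  have hclosed : IsClosed {p : (Fin n → X) × X | p.1 j = p.2} :=
    isClosed_eq (by fun_prop) continuous_snd
  have hmeas : MeasurableSet[borel ((Fin n → X) × X)] {p : (Fin n → X) × X | p.1 j = p.2} := by
    letI : MeasurableSpace ((Fin n → X) × X) := borel _
    haveI : BorelSpace ((Fin n → X) × X) := ⟨rfl⟩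
    exact hclosed.measurableSet
  have h1 : AnalyticSet ((G ×ˢ A) ∩ {p : (Fin n → X) × X | p.1 j = p.2}) :=
    analyticSet_inter_borel (analyticSet_prod hG hA) hmeas
  have h2 := h1.image_of_continuous continuous_fst
  have : Prod.fst '' ((G ×ˢ A) ∩ {p : (Fin n → X) × X | p.1 j = p.2})
      = {g ∈ G | g j ∈ A} := by
    ext g
    constructor
    · rintro ⟨⟨g', x⟩, ⟨⟨hg', hx⟩, h⟩, rfl⟩
      exact ⟨hg', by rw [h]; exact hx⟩
    · rintro ⟨hg, hgj⟩
      exact ⟨(g, g j), ⟨⟨hg, hgj⟩, rfl⟩, rfl⟩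
  rwa [this] at h2

theorem analytic_separation_dihypergraph
    (n : ℕ) (hn : 2 ≤ n) (X : Type) [TopologicalSpace X] [T2Space X]
    (G : Set (Fin n → X)) (hG : AnalyticSet G)
    (hGnc : ∀ x ∈ G, ¬ ∀ i j : Fin n, x i = x j)
    (A : Set X) (hA : AnalyticSet A)
    (hAind : ∀ x ∈ G, ¬ ∀ i, x i ∈ A) :
    ∃ B : Set X, MeasurableSet[borel X] B ∧ A ⊆ B ∧
      ∀ x ∈ G, ¬ ∀ i, x i ∈ B := by
  letI : MeasurableSpace X := borel X
  haveI : BorelSpace X := ⟨rfl⟩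
  haveI : NeZero n := ⟨by omega⟩
  -- the "partial neighborhood" sets
  set P : ℕ → Set X → Set X := fun k V =>
    ⋃ (i : Fin n), ⋃ (S : Finset (Fin n)), ⋃ (_ : S.card ≤ k),
      (fun g : Fin n → X => g i) ''
        (G ∩ ⋂ j : Fin n, (if j ∈ S then {g | g j ∈ V} else {g | g j ∈ A ∨ g j = g i}))
    with hP
  -- each such set is analytic when V is Borel
  have Pana : ∀ (k : ℕ) (V : Set X), MeasurableSet[borel X] V → AnalyticSet (P k V) := by
    intro k V hV
    refine AnalyticSet.iUnion fun i => AnalyticSet.iUnion fun S => ?_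
    rw [Set.iUnion_eq_if]
    split
    swap
    · exact analyticSet_empty
    refine AnalyticSet.image_of_continuous ?_ (by fun_prop)
    have : (G ∩ ⋂ j : Fin n, (if j ∈ S then {g | g j ∈ V} else {g | g j ∈ A ∨ g j = g i}))
        = ⋂ j : Fin n, (G ∩ (if j ∈ S then {g | g j ∈ V} else {g | g j ∈ A ∨ g j = g i})) := by
      rw [Set.inter_iInter]
    rw [this]
    refine AnalyticSet.iInter fun j => ?_
    by_cases hj : j ∈ S
    · simp only [hj, if_pos]
      refine analyticSet_inter_borel hG ?_
      letI : MeasurableSpace (Fin n → X) := borel _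
      haveI : BorelSpace (Fin n → X) := ⟨rfl⟩
      have : Measurable fun g : Fin n → X => g j := (continuous_apply j).measurable
      exact this hV
    · simp only [hj, if_neg, not_false_iff]
      have : G ∩ {g : Fin n → X | g j ∈ A ∨ g j = g i}
          = {g ∈ G | g j ∈ A} ∪ (G ∩ {g | g j = g i}) := by
        ext g; by_cases h : g ∈ G <;> simp [h, Set.mem_inter_iff, and_or_left]
      rw [this]
      refine analyticSet_union (analyticSet_coord_mem hG hA j) ?_
      refine analyticSet_inter_borel hG ?_
      letI : MeasurableSpace (Fin n → X) := borel _
      haveI : BorelSpace (Fin n → X) := ⟨rfl⟩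
      exact (isClosed_eq (continuous_apply j) (continuous_apply i)).measurableSet
  -- membership criterion for P
  have Pmem : ∀ (k : ℕ) (V : Set X) (x : X), x ∈ P k V ↔
      ∃ (i : Fin n) (S : Finset (Fin n)), S.card ≤ k ∧ ∃ g ∈ G,
        (∀ j, if j ∈ S then g j ∈ V else (g j ∈ A ∨ g j = g i)) ∧ g i = x := by
    intro k V x
    simp only [hP, Set.mem_iUnion, Set.mem_image, Set.mem_inter_iff, Set.mem_iInter]
    constructor
    · rintro ⟨i, S, hS, g, ⟨hg, hj⟩, rfl⟩
      refine ⟨i, S, hS, g, hg, fun j => ?_, rfl⟩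
      have := hj j
      by_cases h : j ∈ S
      · rw [if_pos h]; rw [if_pos h] at this; exact this
      · rw [if_neg h]; rw [if_neg h] at this; exact this
    · rintro ⟨i, S, hS, g, hg, hj, rfl⟩
      refine ⟨i, S, hS, g, ⟨hg, fun j => ?_⟩, rfl⟩
      have := hj j
      by_cases h : j ∈ S
      · rw [if_pos h] at this ⊢; exact this
      · rw [if_neg h] at this ⊢; exact this
  -- the main inductive construction
  have main : ∀ k : ℕ, ∃ V : Set X, MeasurableSet[borel X] V ∧ A ⊆ V ∧
      ∀ g ∈ G, ∀ (i : Fin n) (S : Finset (Fin n)), S.card ≤ k → g i ∈ V →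
        (∀ j ∉ S, g j ∈ A ∨ g j = g i) → (∀ j ∈ S, g j ∈ V) → False := by
    intro k
    induction k with
    | zero =>
      have hdisj : Disjoint A (P 0 Set.univ) := by
        rw [Set.disjoint_left]
        intro x hxA hxP
        rw [Pmem] at hxP
        obtain ⟨i, S, hS, g, hg, hj, hgi⟩ := hxP
        have hSempty : S = ∅ := Finset.card_eq_zero.mp (Nat.le_zero.mp hS)
        refine hAind g hg fun j => ?_
        have := hj j
        rw [hSempty] at this
        simp only [Finset.notMem_empty, if_false] at this
        rcases this with h | h
        · exact h
        · rw [h, hgi]; exact hxA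
      obtain ⟨u, hAu, hdis, hum⟩ :=
        hA.measurablySeparable (Pana 0 Set.univ MeasurableSet.univ) hdisj
      refine ⟨u, hum, hAu, ?_⟩
      intro g hg i S hS hgi hout _
      have hSempty : S = ∅ := Finset.card_eq_zero.mp (Nat.le_zero.mp hS)
      have : g i ∈ P 0 Set.univ := by
        rw [Pmem]
        refine ⟨i, ∅, by simp, g, hg, fun j => ?_, rfl⟩
        simp only [Finset.notMem_empty, if_false]
        exact hout j (by rw [hSempty]; exact Finset.notMem_empty j)
      exact Set.disjoint_left.mp hdis this hgi
    | succ k ih =>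
      obtain ⟨V, hVm, hAV, hVprop⟩ := ih
      have hdisj : Disjoint A (P (k + 1) V) := by
        rw [Set.disjoint_left]
        intro x hxA hxP
        rw [Pmem] at hxP
        obtain ⟨i, S, hS, g, hg, hj, hgi⟩ := hxP
        by_cases hSne : S = ∅
        · refine hAind g hg fun j => ?_
          have := hj j
          rw [hSne] at this
          simp only [Finset.notMem_empty, if_false] at this
          rcases this with h | h
          · exact h
          · rw [h, hgi]; exact hxA
        · obtain ⟨j₀, hj₀⟩ := Finset.nonempty_iff_ne_empty.mpr hSne
          have hgj₀V : g j₀ ∈ V := by have := hj j₀; rwa [if_pos hj₀] at this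
          refine hVprop g hg j₀ (S.erase j₀) ?_ hgj₀V ?_ ?_
          · have := Finset.card_erase_of_mem hj₀
            omega
          · intro j hjS
            by_cases hjmem : j ∈ S
            · have : j = j₀ := by
                by_contra hne
                exact hjS (Finset.mem_erase.mpr ⟨hne, hjmem⟩)
              right; rw [this]
            · have := hj j
              rw [if_neg hjmem] at this
              rcases this with h | h
              · left; exact h
              · left; rw [h, hgi]; exact hxA
          · intro j hjS
            have hjmem : j ∈ S := Finset.mem_of_mem_erase hjS
            have := hj j; rwa [if_pos hjmem] at this
      obtain ⟨u, hAu, hdis, hum⟩ := hA.measurablySeparable (Pana (k + 1) V hVm) hdisj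
      refine ⟨V ∩ u, hVm.inter hum, Set.subset_inter hAV hAu, ?_⟩
      intro g hg i S hS hgi hout hin
      have : g i ∈ P (k + 1) V := by
        rw [Pmem]
        refine ⟨i, S, hS, g, hg, fun j => ?_, rfl⟩
        by_cases hj : j ∈ S
        · rw [if_pos hj]; exact (hin j hj).1
        · rw [if_neg hj]; exact hout j hj
      exact Set.disjoint_left.mp hdis this hgi.2
  obtain ⟨V, hVm, hAV, hVprop⟩ := main n
  refine ⟨V, hVm, hAV, ?_⟩
  intro g hg hall
  exact hVprop g hg 0 Finset.univ (by simp) (hall 0) (fun j hj => (hj (Finset.mem_univ j)).elim)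
    (fun j _ => hall j)
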